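/- Let W ⊆ ℝⁿ be a nonempty closed convex set and F, F' : ℝⁿ → ℝⁿ maps of the form F(w) = ε(Mw − b), F'(w) = ε(Mw − b + (1/k)(ℓℓᵀ w − s ℓ)) where M is symmetric with M ⪰ D̲ I (D̲ > 0), ε > 0 satisfies ε‖ℓ‖² < 1 and ε λ_max(M + (1/k)ℓℓᵀ) < 1. If w ∈ W satisfies w = proj_W(w − F(w)) and w' ∈ W satisfies w' = proj_W(w' − F'(w')), then ‖w' − w‖ ≤ (ε/k)‖ℓℓᵀ w' − s ℓ‖ / (D̲ ε), i.e., ‖w' − w‖ ≤ ‖ℓℓᵀ w' − s ℓ‖ / (D̲ k). -/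
import Mathlib


open RealInnerProductSpace

set_option maxHeartbeats 1000000

theorem stmt_11 {n : ℕ}
    (W : Set (EuclideanSpace ℝ (Fin n)))
    (hW : W.Nonempty) (hWclosed : IsClosed W) (hWconvex : Convex ℝ W)
    -- proj is the metric projection onto W
    (proj : EuclideanSpace ℝ (Fin n) → EuclideanSpace ℝ (Fin n))
    (hproj : ∀ x, proj x ∈ W ∧ ∀ u ∈ W, ‖x - proj x‖ ≤ ‖x - u‖)
    -- M symmetric with M ⪰ D̲ I
    (M : EuclideanSpace ℝ (Fin n) →ₗ[ℝ] EuclideanSpace ℝ (Fin n))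
    (hMsymm : ∀ x y, ⟪M x, y⟫ = ⟪x, M y⟫)
    (Dlow : ℝ) (hDlow : 0 < Dlow)
    (hMlow : ∀ x, Dlow * ‖x‖ ^ 2 ≤ ⟪M x, x⟫)
    (b ℓ : EuclideanSpace ℝ (Fin n)) (s : ℝ)
    (k : ℕ) (hk : 0 < k) (ε : ℝ) (hε : 0 < ε)
    (hεℓ : ε * ‖ℓ‖ ^ 2 < 1)
    (hεmax : ∀ x, x ≠ 0 →
      ε * ⟪M x + (1 / (k : ℝ)) • (⟪ℓ, x⟫ • ℓ), x⟫ < ‖x‖ ^ 2)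
    (F F' : EuclideanSpace ℝ (Fin n) → EuclideanSpace ℝ (Fin n))
    (hF : ∀ w, F w = ε • (M w - b))
    (hF' : ∀ w, F' w = ε • (M w - b + (1 / (k : ℝ)) • (⟪ℓ, w⟫ • ℓ - s • ℓ)))
    (w w' : EuclideanSpace ℝ (Fin n))
    (hw : w ∈ W) (hw' : w' ∈ W)
    (hwfix : w = proj (w - F w)) (hw'fix : w' = proj (w' - F' w')) :
    ‖w' - w‖ ≤ ‖⟪ℓ, w'⟫ • ℓ - s • ℓ‖ / (Dlow * k) := by
  -- variational characterization of the projection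
  have char : ∀ x v, v ∈ W → v = proj x → ∀ u ∈ W, ⟪x - v, u - v⟫ ≤ 0 := by
    intro x v hv hvfix u hu
    have hnon : Nonempty W := ⟨⟨v, hv⟩⟩
    have hbdd : BddBelow (Set.range fun z : W => ‖x - (z : EuclideanSpace ℝ (Fin n))‖) := by
      refine ⟨0, ?_⟩
      rintro _ ⟨z, rfl⟩
      exact norm_nonneg _
    have heq : ‖x - v‖ = ⨅ z : W, ‖x - (z : EuclideanSpace ℝ (Fin n))‖ := by
      apply le_antisymm
      · exact le_ciInf fun z => by rw [hvfix]; exact (hproj x).2 z z.2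
      · exact ciInf_le hbdd ⟨v, hv⟩
    exact (norm_eq_iInf_iff_real_inner_le_zero hWconvex hv).1 heq u hu
  have h1 : ⟪(w - F w) - w, w' - w⟫ ≤ 0 := char _ _ hw hwfix w' hw'
  have h2 : ⟪(w' - F' w') - w', w - w'⟫ ≤ 0 := char _ _ hw' hw'fix w hw
  set d := w' - w with hd
  set r := ⟪ℓ, w'⟫ • ℓ - s • ℓ with hr
  have h1' : 0 ≤ ⟪F w, d⟫ := by
    have : (w - F w) - w = -(F w) := by abel
    rw [this, inner_neg_left] at h1; linarith
  have h2' : ⟪F' w', d⟫ ≤ 0 := by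
    have e1 : (w' - F' w') - w' = -(F' w') := by abel
    have e2 : w - w' = -d := by rw [hd]; abel
    rw [e1, e2, inner_neg_left, inner_neg_right] at h2; linarith
  have key : ε * ⟪M d, d⟫ + ε * ((1 / (k : ℝ)) * ⟪r, d⟫) ≤ 0 := by
    have hdiff : F' w' - F w = ε • (M d) + ε • ((1 / (k : ℝ)) • r) := by
      rw [hF', hF, hd, hr, map_sub]
      simp only [smul_sub, smul_add]
      abel
    have : ⟪F' w' - F w, d⟫ ≤ 0 := by
      rw [inner_sub_left]; linarith
    rw [hdiff, inner_add_left, real_inner_smul_left, real_inner_smul_left,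
      real_inner_smul_left] at this
    linarith
  have hMd : Dlow * ‖d‖ ^ 2 ≤ ⟪M d, d⟫ := hMlow d
  have hCS : |⟪r, d⟫| ≤ ‖r‖ * ‖d‖ := abs_real_inner_le_norm r d
  have hkpos : (0 : ℝ) < k := Nat.cast_pos.2 hk
  have hmain : Dlow * ‖d‖ ^ 2 ≤ (1 / (k : ℝ)) * (‖r‖ * ‖d‖) := by
    have hk1 : (0:ℝ) ≤ 1 / (k : ℝ) := by positivity
    have h3 : ⟪M d, d⟫ + (1 / (k : ℝ)) * ⟪r, d⟫ ≤ 0 := by nlinarith [key]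
    have h4 : -⟪r, d⟫ ≤ ‖r‖ * ‖d‖ := by
      linarith [neg_abs_le (⟪r, d⟫ : ℝ), hCS]
    nlinarith [h3, h4, hk1]
  rcases eq_or_ne d 0 with h0 | h0
  · rw [h0]; simp; positivity
  · have hdpos : 0 < ‖d‖ := norm_pos_iff.2 h0
    rw [le_div_iff₀ (by positivity)]
    have h5 : Dlow * ‖d‖ ≤ (1 / (k : ℝ)) * ‖r‖ := by
      have : Dlow * ‖d‖ * ‖d‖ ≤ (1 / (k : ℝ)) * ‖r‖ * ‖d‖ := by nlinarith
      exact le_of_mul_le_mul_right this hdpos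
    have hkpos' : (0:ℝ) < (k:ℝ) := hkpos
    calc ‖d‖ * (Dlow * k) = Dlow * ‖d‖ * k := by ring
      _ ≤ (1 / (k : ℝ)) * ‖r‖ * k := by nlinarith
      _ = ‖r‖ := by field_simp
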